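/- arXiv:2006.08275 — 5 statements merged into one kernel-verified Lean document; each statement's English description precedes it below -/
import Mathlib

section
/- For every real δ ∈ (0, 1/2) and every real p > (2+8δ)/(3+2δ) there exists a constant C > 0 such that for every sequence (y_j)_{j≥1} of nonnegative real numbers, ∑_{i=1}^∞ i^{4δ} ( ∑_{j=1}^∞ y_j/(i^p + j^4) )² ≤ C² · ∑_{j=1}^∞ j^{4δ} y_j², where both sides are interpreted as sums in [0, ∞]. -/
open scoped ENNReal NNReal
open MeasureTheory

local instance : MeasurableSpace ℕ+ := ⊤
local instance : MeasurableSingletonClass ℕ+ := ⟨fun _ => trivial⟩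

/-- Cauchy–Schwarz for `ℝ≥0∞`-valued tsums over `ℕ+`. -/
lemma pnat_tsum_mul_sq_le (f g : ℕ+ → ℝ≥0∞) :
    (∑' j, f j * g j) ^ 2 ≤ (∑' j, (f j) ^ 2) * (∑' j, (g j) ^ 2) := by
  have hm : ∀ h : ℕ+ → ℝ≥0∞, Measurable h := fun h => measurable_of_countable h
  have hpq : (2:ℝ).HolderConjugate 2 := Real.HolderConjugate.two_two
  have h := ENNReal.lintegral_mul_le_Lp_mul_Lq (Measure.count : Measure ℕ+) hpq
    (hm f).aemeasurable (hm g).aemeasurable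
  simp only [Pi.mul_apply, lintegral_count] at h
  have h2 : ∀ u : ℕ+ → ℝ≥0∞, (∑' j, u j ^ (2:ℝ)) = ∑' j, (u j) ^ 2 := by
    intro u; apply tsum_congr; intro j; rw [← ENNReal.rpow_natCast (u j) 2]; norm_num
  calc (∑' j, f j * g j) ^ 2
      ≤ ((∑' j, f j ^ (2:ℝ)) ^ (1/(2:ℝ)) * (∑' j, g j ^ (2:ℝ)) ^ (1/(2:ℝ))) ^ 2 :=
        pow_le_pow_left₀ (zero_le (a := _)) h 2
    _ = (∑' j, (f j) ^ 2) * (∑' j, (g j) ^ 2) := by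
        rw [mul_pow, ← ENNReal.rpow_natCast (_ ^ (1/(2:ℝ))) 2,
          ← ENNReal.rpow_natCast (_ ^ (1/(2:ℝ))) 2,
          ← ENNReal.rpow_mul, ← ENNReal.rpow_mul, h2 f, h2 g]
        norm_num

lemma tsum_pnat_rpow_lt_top {s : ℝ} (hs : s < -1) :
    ∑' i : ℕ+, ((i:ℕ) : ℝ≥0∞) ^ s < ⊤ := by
  have hsum : Summable (fun i : ℕ+ => ((i:ℕ) : ℝ≥0) ^ s) := by
    rw [← NNReal.summable_coe]
    have h1 : Summable (fun n : ℕ => (n : ℝ) ^ s) := Real.summable_nat_rpow.mpr hs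
    have h2 := h1.comp_injective
      (fun a b h => PNat.coe_injective h : Function.Injective (PNat.val))
    exact h2.congr (fun i => by rw [NNReal.coe_rpow, NNReal.coe_natCast]; rfl)
  have hne : ∑' i : ℕ+, (((((i:ℕ):ℝ≥0)^s) : ℝ≥0) : ℝ≥0∞) ≠ ⊤ :=
    ENNReal.tsum_coe_ne_top_iff_summable.mpr hsum
  have key : ∀ i : ℕ+, ((i:ℕ):ℝ≥0∞)^s = (((((i:ℕ):ℝ≥0)^s) : ℝ≥0) : ℝ≥0∞) := fun i => by
    rw [ENNReal.coe_rpow_of_ne_zero (by positivity)]; simp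
  rw [lt_top_iff_ne_top, tsum_congr key]; exact hne

/-- For every real `δ ∈ (0, 1/2)` and every real `p > (2+8δ)/(3+2δ)` there is `C > 0`
such that for every sequence `(y_j)_{j≥1}` of nonnegative reals,
`∑_i i^{4δ} (∑_j y_j/(i^p + j^4))² ≤ C² ∑_j j^{4δ} y_j²`, the sums taken in `[0,∞]`. -/
theorem B_linear_growth_bound (δ p : ℝ) (hδ0 : 0 < δ) (hδ1 : δ < 1 / 2)
    (hp : (2 + 8 * δ) / (3 + 2 * δ) < p) :
    ∃ C : ℝ, 0 < C ∧ ∀ y : ℕ+ → ℝ≥0,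
      ∑' i : ℕ+, ENNReal.ofReal ((i : ℝ) ^ (4 * δ)) *
          (∑' j : ℕ+, (y j : ℝ≥0∞) / ENNReal.ofReal ((i : ℝ) ^ p + (j : ℝ) ^ (4 : ℕ))) ^ 2
        ≤ ENNReal.ofReal (C ^ 2) *
          ∑' j : ℕ+, ENNReal.ofReal ((j : ℝ) ^ (4 * δ)) * (y j : ℝ≥0∞) ^ 2 := by
  -- real exponent arithmetic
  have hδ4 : (0:ℝ) < 3 + 2*δ := by linarith
  have hppos : 0 < p := lt_trans (div_pos (by linarith) hδ4) hp
  have hkey : 2 + 8*δ < p * (3 + 2*δ) := (div_lt_iff₀ hδ4).mp hp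
  set a : ℝ := (1 + 4*δ)/p with ha_def
  set b : ℝ := (7 + 4*δ)/4 with hb_def
  have ha_lt2 : a < 2 := by rw [ha_def, div_lt_iff₀ hppos]; nlinarith
  have hab : a < b := by
    rw [ha_def, hb_def, div_lt_div_iff₀ hppos (by norm_num)]; nlinarith
  have ha_pos : 0 < a := div_pos (by linarith) hppos
  set α : ℝ := min ((a+b)/2) 2 with hα_def
  have hαa : a < α := lt_min (by linarith) ha_lt2
  have hα2 : α ≤ 2 := min_le_right _ _
  have hα0 : 0 ≤ α := le_of_lt (lt_trans ha_pos hαa)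
  have hαb : α < b := by
    rcases le_total ((a+b)/2) 2 with h | h
    · rw [hα_def, min_eq_left h]; linarith
    · rw [hα_def, min_eq_right h]; linarith
  set s : ℝ := 4*δ - p*α with hs_def
  set t : ℝ := 4*α - 4*δ - 8 with ht_def
  have hs : s < -1 := by
    have h1 : 1 + 4*δ < α * p := (div_lt_iff₀ hppos).mp hαa
    rw [hs_def]; nlinarith
  have ht : t < -1 := by
    have : α < (7+4*δ)/4 := hαb
    rw [ht_def]; linarith
  -- ENNReal setup
  have hI0 : ∀ i : ℕ+, ((i:ℕ) : ℝ≥0∞) ≠ 0 := fun i => by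
    simp [Nat.cast_ne_zero, i.ne_zero]
  have hIt : ∀ i : ℕ+, ((i:ℕ) : ℝ≥0∞) ≠ ⊤ := fun i => by simp
  set D : ℕ+ → ℕ+ → ℝ≥0∞ := fun i j => ((i:ℕ):ℝ≥0∞)^p + ((j:ℕ):ℝ≥0∞)^(4:ℝ) with hD_def
  have hD0 : ∀ i j, D i j ≠ 0 := fun i j => by
    simp only [hD_def]
    intro h
    have := (ENNReal.rpow_pos (by simpa [pos_iff_ne_zero] using hI0 i) (hIt i) (p := p))
    rw [add_eq_zero] at h
    exact this.ne' h.1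
  have hDt : ∀ i j, D i j ≠ ⊤ := fun i j => by
    simp only [hD_def]
    exact ENNReal.add_ne_top.mpr
      ⟨ENNReal.rpow_ne_top_of_nonneg hppos.le (hIt i),
       ENNReal.rpow_ne_top_of_nonneg (by norm_num) (hIt j)⟩
  -- conversion lemmas ofReal → rpow
  have hofr : ∀ (i:ℕ+) (r:ℝ), ENNReal.ofReal ((i:ℝ)^r) = ((i:ℕ):ℝ≥0∞)^r := by
    intro i r
    have hx : (0:ℝ) < ((i:ℕ):ℝ) := by exact_mod_cast i.pos
    rw [← ENNReal.ofReal_rpow_of_pos hx, ENNReal.ofReal_natCast]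
  have hDof : ∀ i j : ℕ+, ENNReal.ofReal ((i:ℝ)^p + (j:ℝ)^(4:ℕ)) = D i j := by
    intro i j
    rw [hD_def, ENNReal.ofReal_add (by positivity) (by positivity), hofr i p,
      ← Real.rpow_natCast (((j:ℕ):ℝ)) 4, hofr j]
    norm_num
  -- rpow facts
  have hIpos : ∀ i : ℕ+, (0:ℝ≥0∞) < ((i:ℕ):ℝ≥0∞) := fun i => pos_iff_ne_zero.mpr (hI0 i)
  have hrp0 : ∀ (i:ℕ+) (r:ℝ), ((i:ℕ):ℝ≥0∞)^r ≠ 0 :=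
    fun i r => (ENNReal.rpow_pos (hIpos i) (hIt i)).ne'
  have hrpt : ∀ (i:ℕ+) (r:ℝ), ((i:ℕ):ℝ≥0∞)^r ≠ ⊤ := fun i r => by
    have hne : ((i:ℕ):ℝ≥0) ≠ 0 := by exact_mod_cast i.ne_zero
    rw [show ((i:ℕ):ℝ≥0∞) = (((i:ℕ):ℝ≥0):ℝ≥0∞) by simp,
      ← ENNReal.coe_rpow_of_ne_zero hne]
    exact ENNReal.coe_ne_top
  -- pointwise kernel bound
  have key : ∀ i j : ℕ+, ((i:ℕ):ℝ≥0∞)^(4*δ) * (((j:ℕ):ℝ≥0∞)^(-(4*δ)) / (D i j)^2)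
      ≤ ((i:ℕ):ℝ≥0∞)^s * ((j:ℕ):ℝ≥0∞)^t := by
    intro i j
    have hiP : ((i:ℕ):ℝ≥0∞)^p ≤ D i j := by rw [hD_def]; exact le_self_add
    have hj4 : ((j:ℕ):ℝ≥0∞)^(4:ℝ) ≤ D i j := by rw [hD_def]; exact le_add_self
    have hden : ((i:ℕ):ℝ≥0∞)^(p*α) * ((j:ℕ):ℝ≥0∞)^(4*(2-α)) ≤ (D i j)^2 := by
      have h1 : ((i:ℕ):ℝ≥0∞)^(p*α) ≤ (D i j)^α := by
        rw [ENNReal.rpow_mul]; exact ENNReal.rpow_le_rpow hiP hα0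
      have h2 : ((j:ℕ):ℝ≥0∞)^(4*(2-α)) ≤ (D i j)^(2-α) := by
        rw [ENNReal.rpow_mul]; exact ENNReal.rpow_le_rpow hj4 (by linarith)
      calc ((i:ℕ):ℝ≥0∞)^(p*α) * ((j:ℕ):ℝ≥0∞)^(4*(2-α)) ≤ (D i j)^α * (D i j)^(2-α) :=
            mul_le_mul' h1 h2
        _ = (D i j)^((2:ℕ):ℝ) := by
            rw [← ENNReal.rpow_add _ _ (hD0 i j) (hDt i j)]; norm_num
        _ = (D i j)^2 := by rw [ENNReal.rpow_natCast]
    have hmono : ((j:ℕ):ℝ≥0∞)^(-(4*δ)) / (D i j)^2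
        ≤ ((j:ℕ):ℝ≥0∞)^(-(4*δ)) / (((i:ℕ):ℝ≥0∞)^(p*α) * ((j:ℕ):ℝ≥0∞)^(4*(2-α))) :=
      ENNReal.div_le_div_left hden _
    refine le_trans (mul_le_mul_right hmono _) (le_of_eq ?_)
    rw [div_eq_mul_inv, ENNReal.mul_inv (Or.inl (hrp0 i _)) (Or.inl (hrpt i _)),
      ← ENNReal.rpow_neg, ← ENNReal.rpow_neg, hs_def, ht_def,
      show 4*δ - p*α = 4*δ + -(p*α) by ring,
      show 4*α - 4*δ - 8 = -(4*δ) + -(4*(2-α)) by ring,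
      ENNReal.rpow_add _ _ (hI0 i) (hIt i), ENNReal.rpow_add _ _ (hI0 j) (hIt j)]
    ring
  -- the double sum is finite
  have hGle : (∑' i:ℕ+, ((i:ℕ):ℝ≥0∞)^(4*δ) * ∑' j:ℕ+, ((j:ℕ):ℝ≥0∞)^(-(4*δ)) / (D i j)^2)
      ≤ (∑' i:ℕ+, ((i:ℕ):ℝ≥0∞)^s) * (∑' j:ℕ+, ((j:ℕ):ℝ≥0∞)^t) := by
    calc (∑' i:ℕ+, ((i:ℕ):ℝ≥0∞)^(4*δ) * ∑' j:ℕ+, ((j:ℕ):ℝ≥0∞)^(-(4*δ)) / (D i j)^2)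
        = ∑' i:ℕ+, ∑' j:ℕ+, ((i:ℕ):ℝ≥0∞)^(4*δ) * (((j:ℕ):ℝ≥0∞)^(-(4*δ)) / (D i j)^2) :=
          tsum_congr fun i => ENNReal.tsum_mul_left.symm
      _ ≤ ∑' i:ℕ+, ∑' j:ℕ+, ((i:ℕ):ℝ≥0∞)^s * ((j:ℕ):ℝ≥0∞)^t :=
          ENNReal.tsum_le_tsum fun i => ENNReal.tsum_le_tsum fun j => key i j
      _ = ∑' i:ℕ+, ((i:ℕ):ℝ≥0∞)^s * ∑' j:ℕ+, ((j:ℕ):ℝ≥0∞)^t :=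
          tsum_congr fun i => ENNReal.tsum_mul_left
      _ = _ := ENNReal.tsum_mul_right
  have hMt : (∑' i:ℕ+, ((i:ℕ):ℝ≥0∞)^s) * (∑' j:ℕ+, ((j:ℕ):ℝ≥0∞)^t) ≠ ⊤ :=
    (ENNReal.mul_lt_top (tsum_pnat_rpow_lt_top hs) (tsum_pnat_rpow_lt_top ht)).ne
  set M : ℝ≥0∞ := (∑' i:ℕ+, ((i:ℕ):ℝ≥0∞)^s) * (∑' j:ℕ+, ((j:ℕ):ℝ≥0∞)^t) with hM_def
  refine ⟨Real.sqrt (M.toReal + 1), Real.sqrt_pos.mpr (by positivity), fun y => ?_⟩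
  have hCM : M ≤ ENNReal.ofReal ((Real.sqrt (M.toReal + 1))^2) := by
    rw [Real.sq_sqrt (by positivity), ENNReal.ofReal_add ENNReal.toReal_nonneg zero_le_one,
      ENNReal.ofReal_one, ENNReal.ofReal_toReal hMt]
    exact le_self_add
  -- Cauchy-Schwarz per i
  have hCS : ∀ i:ℕ+, (∑' j:ℕ+, (y j : ℝ≥0∞) / D i j)^2 ≤
      (∑' j:ℕ+, ((j:ℕ):ℝ≥0∞)^(4*δ) * (y j:ℝ≥0∞)^2) *
        (∑' j:ℕ+, ((j:ℕ):ℝ≥0∞)^(-(4*δ)) / (D i j)^2) := by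
    intro i
    have h := pnat_tsum_mul_sq_le (fun j => ((j:ℕ):ℝ≥0∞)^(2*δ) * (y j:ℝ≥0∞))
      (fun j => ((j:ℕ):ℝ≥0∞)^(-(2*δ)) / D i j)
    have e1 : ∀ j:ℕ+, ((j:ℕ):ℝ≥0∞)^(2*δ) * (y j:ℝ≥0∞) * (((j:ℕ):ℝ≥0∞)^(-(2*δ)) / D i j)
        = (y j:ℝ≥0∞) / D i j := by
      intro j
      rw [ENNReal.rpow_neg, div_eq_mul_inv, div_eq_mul_inv,
        show ((j:ℕ):ℝ≥0∞)^(2*δ) * (y j:ℝ≥0∞) * ((((j:ℕ):ℝ≥0∞)^(2*δ))⁻¹ * (D i j)⁻¹)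
          = (((j:ℕ):ℝ≥0∞)^(2*δ) * (((j:ℕ):ℝ≥0∞)^(2*δ))⁻¹) * ((y j:ℝ≥0∞) * (D i j)⁻¹) from by
            ring,
        ENNReal.mul_inv_cancel (hrp0 j _) (hrpt j _), one_mul]
    have e2 : ∀ j:ℕ+, (((j:ℕ):ℝ≥0∞)^(2*δ) * (y j:ℝ≥0∞))^2
        = ((j:ℕ):ℝ≥0∞)^(4*δ) * (y j:ℝ≥0∞)^2 := by
      intro j
      rw [mul_pow, ← ENNReal.rpow_natCast (((j:ℕ):ℝ≥0∞)^(2*δ)) 2, ← ENNReal.rpow_mul]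
      congr 2
      push_cast; ring
    have e3 : ∀ j:ℕ+, (((j:ℕ):ℝ≥0∞)^(-(2*δ)) / D i j)^2
        = ((j:ℕ):ℝ≥0∞)^(-(4*δ)) / (D i j)^2 := by
      intro j
      rw [div_eq_mul_inv, mul_pow, ← ENNReal.inv_pow,
        ← ENNReal.rpow_natCast (((j:ℕ):ℝ≥0∞)^(-(2*δ))) 2, ← ENNReal.rpow_mul,
        ← div_eq_mul_inv]
      congr 2
      push_cast; ring
    simp only [e1, e2, e3] at h
    exact h
  -- main chain
  calc ∑' i : ℕ+, ENNReal.ofReal ((i : ℝ) ^ (4 * δ)) *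
        (∑' j : ℕ+, (y j : ℝ≥0∞) / ENNReal.ofReal ((i : ℝ) ^ p + (j : ℝ) ^ (4 : ℕ))) ^ 2
      = ∑' i : ℕ+, ((i:ℕ):ℝ≥0∞)^(4*δ) * (∑' j : ℕ+, (y j : ℝ≥0∞) / D i j)^2 := by
        refine tsum_congr fun i => ?_
        have hin : (∑' j : ℕ+, (y j : ℝ≥0∞) / ENNReal.ofReal ((i : ℝ) ^ p + (j : ℝ) ^ (4 : ℕ)))
            = ∑' j : ℕ+, (y j : ℝ≥0∞) / D i j := tsum_congr fun j => by rw [hDof i j]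
        rw [hofr i (4*δ), hin]
    _ ≤ ∑' i : ℕ+, ((i:ℕ):ℝ≥0∞)^(4*δ) *
          ((∑' j:ℕ+, ((j:ℕ):ℝ≥0∞)^(4*δ) * (y j:ℝ≥0∞)^2) *
            (∑' j:ℕ+, ((j:ℕ):ℝ≥0∞)^(-(4*δ)) / (D i j)^2)) :=
        ENNReal.tsum_le_tsum fun i => mul_le_mul_right (hCS i) _
    _ = (∑' j:ℕ+, ((j:ℕ):ℝ≥0∞)^(4*δ) * (y j:ℝ≥0∞)^2) *
          ∑' i:ℕ+, ((i:ℕ):ℝ≥0∞)^(4*δ) * ∑' j:ℕ+, ((j:ℕ):ℝ≥0∞)^(-(4*δ)) / (D i j)^2 := by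
        rw [← ENNReal.tsum_mul_left]
        exact tsum_congr fun i => by ring
    _ ≤ (∑' j:ℕ+, ((j:ℕ):ℝ≥0∞)^(4*δ) * (y j:ℝ≥0∞)^2) * M := mul_le_mul_right hGle _
    _ ≤ (∑' j:ℕ+, ((j:ℕ):ℝ≥0∞)^(4*δ) * (y j:ℝ≥0∞)^2) *
          ENNReal.ofReal ((Real.sqrt (M.toReal + 1))^2) := mul_le_mul_right hCM _
    _ = ENNReal.ofReal ((Real.sqrt (M.toReal + 1))^2) *
          ∑' j : ℕ+, ENNReal.ofReal ((j : ℝ) ^ (4 * δ)) * (y j : ℝ≥0∞) ^ 2 := by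
        rw [mul_comm]
        congr 1
        exact tsum_congr fun j => by rw [hofr j (4*δ)]
end

section
/- For all real numbers p > 0, ρ_Q > 1, γ ≥ 0 and α with 0 < α < (7 + ρ_Q + 4γ)/(2ρ_Q), there exist ϑ ∈ (0, 1/2) and a constant C > 0 such that for every sequence (y_j)_{j≥1} of nonnegative real numbers, ∑_{i=1}^∞ ∑_{j=1}^∞ i^{−4ϑ} · j^{(2α−1)ρ_Q} · y_j² / (i^p + j^4)² ≤ C² · ∑_{j=1}^∞ j^{4γ} y_j², where both sides are interpreted as sums in [0, ∞]. -/
open scoped ENNReal NNReal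

private lemma amgm_aux {a b : ℝ} (ha : 1 ≤ a) (hb : 1 ≤ b) {q : ℝ} (hq : 0 ≤ q) :
    a ^ (q / 4) * b ^ (7 : ℝ) ≤ (a ^ q + b ^ (4 : ℕ)) ^ 2 := by
  have ha0 : (0:ℝ) ≤ a := by linarith
  have hb0 : (0:ℝ) ≤ b := by linarith
  have h1 : a ^ (q/8) * b ^ (7/2 : ℝ) ≤ a ^ q + b ^ (4:ℕ) := by
    have hg := Real.geom_mean_le_arith_mean2_weighted (by norm_num : (0:ℝ) ≤ 1/8)
      (by norm_num : (0:ℝ) ≤ 7/8) (Real.rpow_nonneg ha0 q) (pow_nonneg hb0 4)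
      (by norm_num : (1:ℝ)/8 + 7/8 = 1)
    calc a ^ (q/8) * b ^ (7/2:ℝ)
        = (a ^ q) ^ (1/8:ℝ) * (b ^ (4:ℕ) : ℝ) ^ (7/8:ℝ) := by
          rw [← Real.rpow_natCast b 4, ← Real.rpow_mul ha0, ← Real.rpow_mul hb0]
          congr 1
          · congr 1; ring
          · congr 1; norm_num
      _ ≤ 1/8 * a ^ q + 7/8 * b ^ (4:ℕ) := hg
      _ ≤ a ^ q + b ^ (4:ℕ) := by
          nlinarith [Real.rpow_nonneg ha0 q, pow_nonneg hb0 4]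
  have hL : 0 ≤ a ^ (q/8) * b ^ (7/2:ℝ) :=
    mul_nonneg (Real.rpow_nonneg ha0 _) (Real.rpow_nonneg hb0 _)
  have h2 := pow_le_pow_left₀ hL h1 2
  calc a ^ (q/4) * b ^ (7:ℝ)
      = (a ^ (q/8) * b ^ (7/2:ℝ)) ^ 2 := by
        rw [mul_pow, ← Real.rpow_natCast (a ^ (q/8)) 2, ← Real.rpow_natCast (b ^ (7/2:ℝ)) 2,
          ← Real.rpow_mul ha0, ← Real.rpow_mul hb0]
        congr 1
        · congr 1; ring
        · congr 1; norm_num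
    _ ≤ (a ^ q + b ^ (4:ℕ)) ^ 2 := h2

/-- For all real `p > 0`, `ρ_Q > 1`, `γ ≥ 0` and `α` with `0 < α < (7+ρ_Q+4γ)/(2ρ_Q)`,
there exist `ϑ ∈ (0, 1/2)` and `C > 0` such that for every sequence `(y_j)_{j≥1}` of
nonnegative reals,
`∑_i ∑_j i^{−4ϑ} j^{(2α−1)ρ_Q} y_j² / (i^p + j^4)² ≤ C² ∑_j j^{4γ} y_j²`,
the sums taken in `[0,∞]`. -/
theorem B_HS_bound (p ρQ γ α : ℝ) (hp : 0 < p) (hρQ : 1 < ρQ) (hγ : 0 ≤ γ)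
    (hα0 : 0 < α) (hα1 : α < (7 + ρQ + 4 * γ) / (2 * ρQ)) :
    ∃ ϑ : ℝ, 0 < ϑ ∧ ϑ < 1 / 2 ∧ ∃ C : ℝ, 0 < C ∧ ∀ y : ℕ+ → ℝ≥0,
      ∑' i : ℕ+, ∑' j : ℕ+,
          ENNReal.ofReal ((i : ℝ) ^ (-(4 * ϑ)) * (j : ℝ) ^ ((2 * α - 1) * ρQ)) *
            (y j : ℝ≥0∞) ^ 2 / ENNReal.ofReal (((i : ℝ) ^ p + (j : ℝ) ^ (4 : ℕ)) ^ 2)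
        ≤ ENNReal.ofReal (C ^ 2) *
          ∑' j : ℕ+, ENNReal.ofReal ((j : ℝ) ^ (4 * γ)) * (y j : ℝ≥0∞) ^ 2 := by
  have hm0 : 0 < min p 2 := lt_min hp (by norm_num)
  have hm2 : min p 2 ≤ 2 := min_le_right _ _
  have hmp : min p 2 ≤ p := min_le_left _ _
  set m := min p 2 with hm
  set ϑ : ℝ := 1/4 - m/32 with hϑ
  refine ⟨ϑ, by rw [hϑ]; linarith, by rw [hϑ]; linarith, ?_⟩
  set s : ℝ := 4 * ϑ + p/4 with hsdef
  have hs1 : 1 < s := by rw [hsdef, hϑ]; linarith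
  -- exponent bound in j
  have he : (2 * α - 1) * ρQ ≤ 4 * γ + 7 := by
    have h2ρ : 0 < 2 * ρQ := by linarith
    have h := (lt_div_iff₀ h2ρ).mp hα1
    nlinarith
  -- summability of the zeta-type sum
  have hTnat : Summable (fun n : ℕ => (n:ℝ) ^ (-s)) :=
    Real.summable_nat_rpow.mpr (by linarith)
  have hT : Summable (fun i : ℕ+ => (i:ℝ) ^ (-s)) :=
    hTnat.comp_injective (fun a b h => PNat.coe_injective h)
  set T : ℝ := ∑' i : ℕ+, (i:ℝ) ^ (-s) with hTdef
  have hT0 : 0 ≤ T := tsum_nonneg (fun i => Real.rpow_nonneg (by positivity) _)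
  refine ⟨Real.sqrt (T + 1), Real.sqrt_pos.mpr (by linarith), ?_⟩
  intro y
  have hC2 : Real.sqrt (T + 1) ^ 2 = T + 1 := Real.sq_sqrt (by linarith)
  -- key bound on the i-sum constant
  have hK : ∑' i : ℕ+, ENNReal.ofReal ((i:ℝ) ^ (-s)) ≤ ENNReal.ofReal (Real.sqrt (T + 1) ^ 2) := by
    rw [← ENNReal.ofReal_tsum_of_nonneg (fun i => Real.rpow_nonneg (by positivity) _) hT]
    exact ENNReal.ofReal_le_ofReal (by rw [hC2]; linarith)
  -- per-term bound
  have hterm : ∀ (i j : ℕ+),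
      ENNReal.ofReal ((i : ℝ) ^ (-(4 * ϑ)) * (j : ℝ) ^ ((2 * α - 1) * ρQ)) *
          (y j : ℝ≥0∞) ^ 2 / ENNReal.ofReal (((i : ℝ) ^ p + (j : ℝ) ^ (4 : ℕ)) ^ 2)
        ≤ ENNReal.ofReal ((i:ℝ) ^ (-s)) *
          (ENNReal.ofReal ((j : ℝ) ^ (4 * γ)) * (y j : ℝ≥0∞) ^ 2) := by
    intro i j
    have hi1 : (1:ℝ) ≤ (i:ℝ) := by exact_mod_cast i.one_le
    have hj1 : (1:ℝ) ≤ (j:ℝ) := by exact_mod_cast j.one_le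
    have hi0 : (0:ℝ) < (i:ℝ) := by linarith
    have hj0 : (0:ℝ) < (j:ℝ) := by linarith
    set A : ℝ := (i : ℝ) ^ (-(4 * ϑ)) * (j : ℝ) ^ ((2 * α - 1) * ρQ) with hA
    set B : ℝ := ((i : ℝ) ^ p + (j : ℝ) ^ (4 : ℕ)) ^ 2 with hB
    have hBpos : 0 < B := by
      have : (0:ℝ) < (i:ℝ) ^ p := Real.rpow_pos_of_pos hi0 _
      positivity
    have hAB : A ≤ ((i:ℝ) ^ (-s) * (j:ℝ) ^ (4 * γ)) * B := by
      have hamgm : (i:ℝ) ^ (p/4) * (j:ℝ) ^ (7:ℝ) ≤ B :=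
        amgm_aux hi1 hj1 (le_of_lt hp)
      calc A ≤ (i : ℝ) ^ (-(4 * ϑ)) * (j : ℝ) ^ (4 * γ + 7) := by
              apply mul_le_mul_of_nonneg_left _ (Real.rpow_nonneg (le_of_lt hi0) _)
              exact Real.rpow_le_rpow_of_exponent_le hj1 he
        _ = ((i:ℝ) ^ (-s) * (j:ℝ) ^ (4 * γ)) * ((i:ℝ) ^ (p/4) * (j:ℝ) ^ (7:ℝ)) := by
              have hse : -s + p/4 = -(4*ϑ) := by rw [hsdef]; ring
              rw [show ((i:ℝ) ^ (-s) * (j:ℝ) ^ (4*γ)) * ((i:ℝ) ^ (p/4) * (j:ℝ) ^ (7:ℝ))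
                  = ((i:ℝ) ^ (-s) * (i:ℝ) ^ (p/4)) * ((j:ℝ) ^ (4*γ) * (j:ℝ) ^ (7:ℝ)) by ring,
                ← Real.rpow_add hi0, ← Real.rpow_add hj0, hse]
        _ ≤ ((i:ℝ) ^ (-s) * (j:ℝ) ^ (4 * γ)) * B := by
              apply mul_le_mul_of_nonneg_left hamgm
              exact mul_nonneg (Real.rpow_nonneg (le_of_lt hi0) _)
                (Real.rpow_nonneg (le_of_lt hj0) _)
    have hdiv : A / B ≤ (i:ℝ) ^ (-s) * (j:ℝ) ^ (4 * γ) := (div_le_iff₀ hBpos).mpr hAB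
    calc ENNReal.ofReal A * (y j : ℝ≥0∞) ^ 2 / ENNReal.ofReal B
        = ENNReal.ofReal A / ENNReal.ofReal B * (y j : ℝ≥0∞) ^ 2 := by
          rw [div_eq_mul_inv, div_eq_mul_inv, mul_right_comm]
      _ = ENNReal.ofReal (A / B) * (y j : ℝ≥0∞) ^ 2 := by
          rw [ENNReal.ofReal_div_of_pos hBpos]
      _ ≤ ENNReal.ofReal ((i:ℝ) ^ (-s) * (j:ℝ) ^ (4 * γ)) * (y j : ℝ≥0∞) ^ 2 := by
          exact mul_le_mul_left (ENNReal.ofReal_le_ofReal hdiv) _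
      _ = ENNReal.ofReal ((i:ℝ) ^ (-s)) *
            (ENNReal.ofReal ((j : ℝ) ^ (4 * γ)) * (y j : ℝ≥0∞) ^ 2) := by
          rw [ENNReal.ofReal_mul (Real.rpow_nonneg (le_of_lt hi0) _), mul_assoc]
  calc ∑' i : ℕ+, ∑' j : ℕ+,
        ENNReal.ofReal ((i : ℝ) ^ (-(4 * ϑ)) * (j : ℝ) ^ ((2 * α - 1) * ρQ)) *
          (y j : ℝ≥0∞) ^ 2 / ENNReal.ofReal (((i : ℝ) ^ p + (j : ℝ) ^ (4 : ℕ)) ^ 2)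
      ≤ ∑' i : ℕ+, ∑' j : ℕ+, ENNReal.ofReal ((i:ℝ) ^ (-s)) *
          (ENNReal.ofReal ((j : ℝ) ^ (4 * γ)) * (y j : ℝ≥0∞) ^ 2) :=
        ENNReal.tsum_le_tsum (fun i => ENNReal.tsum_le_tsum (fun j => hterm i j))
    _ = ∑' i : ℕ+, ENNReal.ofReal ((i:ℝ) ^ (-s)) *
          ∑' j : ℕ+, ENNReal.ofReal ((j : ℝ) ^ (4 * γ)) * (y j : ℝ≥0∞) ^ 2 :=
        tsum_congr (fun i => ENNReal.tsum_mul_left)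
    _ = (∑' i : ℕ+, ENNReal.ofReal ((i:ℝ) ^ (-s))) *
          ∑' j : ℕ+, ENNReal.ofReal ((j : ℝ) ^ (4 * γ)) * (y j : ℝ≥0∞) ^ 2 :=
        ENNReal.tsum_mul_right
    _ ≤ ENNReal.ofReal (Real.sqrt (T + 1) ^ 2) *
          ∑' j : ℕ+, ENNReal.ofReal ((j : ℝ) ^ (4 * γ)) * (y j : ℝ≥0∞) ^ 2 :=
        mul_le_mul_left hK _
end

section
/- Let a, b, q > 0 and c̄ ≥ 1 be real numbers. For all real numbers M, N, K > 0 with M·N·K ≤ c̄, one has N^{−a} + K^{−b} + M^{−q} ≥ c̄^{−abq/(aq+bq+ab)}. -/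
private lemma aux_pow (c e X x : ℝ) (hc : 0 < c) (hX : 0 < X) (hx : 0 < x)
    (h : X ^ (-x) < c ^ (-e)) : c ^ (e / x) < X := by
  rw [Real.rpow_neg hX.le, Real.rpow_neg hc.le] at h
  have h1 : c ^ e < X ^ x := by
    have := (inv_lt_inv₀ (Real.rpow_pos_of_pos hX x) (Real.rpow_pos_of_pos hc e)).mp h
    linarith
  have h2 : (c ^ e) ^ (1 / x) < (X ^ x) ^ (1 / x) :=
    Real.rpow_lt_rpow (Real.rpow_pos_of_pos hc e).le h1 (by positivity)
  rw [← Real.rpow_mul hc.le, ← Real.rpow_mul hX.le] at h2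
  rw [mul_one_div, mul_one_div, div_self hx.ne', Real.rpow_one] at h2
  exact h2

/-- Let `a, b, q > 0` and `c̄ ≥ 1`. For all `M, N, K > 0` with `M·N·K ≤ c̄`, one has
`N^{−a} + K^{−b} + M^{−q} ≥ c̄^{−abq/(aq+bq+ab)}`. -/
theorem eoc_lower_bound_MNK (a b q c : ℝ) (ha : 0 < a) (hb : 0 < b) (hq : 0 < q)
    (hc : 1 ≤ c) (M N K : ℝ) (hM : 0 < M) (hN : 0 < N) (hK : 0 < K)
    (hcost : M * N * K ≤ c) :
    c ^ (-(a * b * q / (a * q + b * q + a * b))) ≤ N ^ (-a) + K ^ (-b) + M ^ (-q) := by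
  set e := a * b * q / (a * q + b * q + a * b) with he
  have hc0 : (0:ℝ) < c := lt_of_lt_of_le one_pos hc
  by_contra h
  push_neg at h
  have hNp : (0:ℝ) < N ^ (-a) := Real.rpow_pos_of_pos hN _
  have hKp : (0:ℝ) < K ^ (-b) := Real.rpow_pos_of_pos hK _
  have hMp : (0:ℝ) < M ^ (-q) := Real.rpow_pos_of_pos hM _
  have h1 : c ^ (e / a) < N := aux_pow c e N a hc0 hN ha (by linarith)
  have h2 : c ^ (e / b) < K := aux_pow c e K b hc0 hK hb (by linarith)
  have h3 : c ^ (e / q) < M := aux_pow c e M q hc0 hM hq (by linarith)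
  have hprod : c ^ (e / q) * (c ^ (e / a) * c ^ (e / b)) < M * N * K := by
    have := mul_lt_mul'' h1 h2 (Real.rpow_pos_of_pos hc0 _).le (Real.rpow_pos_of_pos hc0 _).le
    have := mul_lt_mul'' h3 this (Real.rpow_pos_of_pos hc0 _).le
      (by positivity)
    linarith [this]
  rw [← Real.rpow_add hc0, ← Real.rpow_add hc0] at hprod
  have hsum : e / q + (e / a + e / b) = 1 := by
    have hD : a * q + b * q + a * b ≠ 0 := by positivity
    rw [he]; field_simp; ring
  rw [hsum, Real.rpow_one] at hprod
  linarith
end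

section
/- Let a, b, q > 0 and c̄ ≥ 1 be real numbers. For all real numbers M, N, K > 0 with M·N²·K ≤ c̄, one has N^{−a} + K^{−b} + M^{−q} ≥ c̄^{−abq/(aq+2bq+ab)}. -/
/-- Let `a, b, q > 0` and `c̄ ≥ 1`. For all `M, N, K > 0` with `M·N²·K ≤ c̄`, one has
`N^{−a} + K^{−b} + M^{−q} ≥ c̄^{−abq/(aq+2bq+ab)}`. -/
theorem eoc_lower_bound_MN2K (a b q c : ℝ) (ha : 0 < a) (hb : 0 < b) (hq : 0 < q)
    (hc : 1 ≤ c) (M N K : ℝ) (hM : 0 < M) (hN : 0 < N) (hK : 0 < K)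
    (hcost : M * N ^ (2 : ℕ) * K ≤ c) :
    c ^ (-(a * b * q / (a * q + 2 * b * q + a * b))) ≤ N ^ (-a) + K ^ (-b) + M ^ (-q) := by
  set E := N ^ (-a) + K ^ (-b) + M ^ (-q) with hEdef
  have hNa : (0:ℝ) < N ^ (-a) := Real.rpow_pos_of_pos hN _
  have hKb : (0:ℝ) < K ^ (-b) := Real.rpow_pos_of_pos hK _
  have hMq : (0:ℝ) < M ^ (-q) := Real.rpow_pos_of_pos hM _
  have hE : 0 < E := by positivity
  -- lower bounds for N, K, M in terms of E
  have hNb : E ^ (-(1/a)) ≤ N := by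
    have h1 : N ^ (-a) ≤ E := by linarith
    have := Real.rpow_le_rpow_of_nonpos hNa h1 (show -(1/a) ≤ 0 from neg_nonpos.mpr (by positivity))
    rwa [← Real.rpow_mul hN.le,
      show (-a) * (-(1/a)) = 1 by field_simp, Real.rpow_one] at this
  have hKc : E ^ (-(1/b)) ≤ K := by
    have h1 : K ^ (-b) ≤ E := by linarith
    have := Real.rpow_le_rpow_of_nonpos hKb h1 (show -(1/b) ≤ 0 from neg_nonpos.mpr (by positivity))
    rwa [← Real.rpow_mul hK.le, show (-b) * (-(1/b)) = 1 by field_simp,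
      Real.rpow_one] at this
  have hMc : E ^ (-(1/q)) ≤ M := by
    have h1 : M ^ (-q) ≤ E := by linarith
    have := Real.rpow_le_rpow_of_nonpos hMq h1 (show -(1/q) ≤ 0 from neg_nonpos.mpr (by positivity))
    rwa [← Real.rpow_mul hM.le, show (-q) * (-(1/q)) = 1 by field_simp,
      Real.rpow_one] at this
  -- combine: E ^ t ≤ c where t = -(1/q) + 2*(-(1/a)) + (-(1/b))
  have hprod : E ^ (-(1/q) + (-(1/a) + -(1/a)) + -(1/b)) ≤ c := by
    calc E ^ (-(1/q) + (-(1/a) + -(1/a)) + -(1/b))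
        = E ^ (-(1/q)) * (E ^ (-(1/a)) * E ^ (-(1/a))) * E ^ (-(1/b)) := by
          rw [Real.rpow_add hE, Real.rpow_add hE, Real.rpow_add hE]
      _ ≤ M * (N * N) * K := by
          have h1 : (0:ℝ) < E ^ (-(1/a)) := Real.rpow_pos_of_pos hE _
          have h2 : (0:ℝ) < E ^ (-(1/b)) := Real.rpow_pos_of_pos hE _
          have h3 : (0:ℝ) < E ^ (-(1/q)) := Real.rpow_pos_of_pos hE _
          gcongr
      _ = M * N ^ (2:ℕ) * K := by ring
      _ ≤ c := hcost
  -- apply antitone rpow with the final exponent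
  have hden : 0 < a * q + 2 * b * q + a * b := by positivity
  have ht : (0:ℝ) < E ^ (-(1/q) + (-(1/a) + -(1/a)) + -(1/b)) := Real.rpow_pos_of_pos hE _
  have hfin := Real.rpow_le_rpow_of_nonpos ht hprod
    (show -(a * b * q / (a * q + 2 * b * q + a * b)) ≤ 0 from neg_nonpos.mpr (by positivity))
  rwa [← Real.rpow_mul hE.le,
    show (-(1/q) + (-(1/a) + -(1/a)) + -(1/b)) * (-(a * b * q / (a * q + 2 * b * q + a * b))) = 1 by
      field_simp; ring, Real.rpow_one] at hfin
end

section
/- Let b, q > 0 and c̄ ≥ 1 be real numbers. For all real numbers M, K > 0 with K·M^{2q} ≤ c̄, one has K^{−b} + M^{−q} ≥ c̄^{−b/(2b+1)}. -/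
/-- Let `b, q > 0` and `c̄ ≥ 1`. For all `M, K > 0` with `K·M^{2q} ≤ c̄`, one has
`K^{−b} + M^{−q} ≥ c̄^{−b/(2b+1)}`. -/
theorem eoc_lower_bound_KM2q (b q c : ℝ) (hb : 0 < b) (hq : 0 < q) (hc : 1 ≤ c)
    (M K : ℝ) (hM : 0 < M) (hK : 0 < K) (hcost : K * M ^ (2 * q) ≤ c) :
    c ^ (-(b / (2 * b + 1))) ≤ K ^ (-b) + M ^ (-q) := by
  have hc0 : (0:ℝ) < c := lt_of_lt_of_le one_pos hc
  have h2b : (0:ℝ) < 2 * b + 1 := by linarith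
  by_cases h : c ^ (-(b / (2 * b + 1))) ≤ K ^ (-b)
  · have : 0 < M ^ (-q) := Real.rpow_pos_of_pos hM _
    linarith
  · push_neg at h
    have hKb : 0 < K ^ (-b) := Real.rpow_pos_of_pos hK _
    -- raise to power -1/b (antitone)
    have h1 : (c ^ (-(b / (2 * b + 1)))) ^ (-(1/b)) < (K ^ (-b)) ^ (-(1/b)) :=
      Real.rpow_lt_rpow_of_neg hKb h (neg_lt_zero.mpr (by positivity))
    rw [← Real.rpow_mul hc0.le, ← Real.rpow_mul hK.le] at h1
    have e1 : -(b / (2 * b + 1)) * -(1 / b) = 1 / (2 * b + 1) := by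
      field_simp
    have e2 : -b * -(1 / b) = 1 := by field_simp
    rw [e1, e2, Real.rpow_one] at h1
    -- so c^(1/(2b+1)) < K, hence M^(2q) < c^(2b/(2b+1))
    have hcp : 0 < c ^ (1 / (2 * b + 1)) := Real.rpow_pos_of_pos hc0 _
    have hM2q : M ^ (2 * q) ≤ c / K := by
      rw [le_div_iff₀ hK]; linarith [mul_comm K (M ^ (2 * q))]
    have hstep : c / K < c ^ (2 * b / (2 * b + 1)) := by
      have : c / K < c / c ^ (1 / (2 * b + 1)) :=
        div_lt_div_of_pos_left hc0 hcp h1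
      calc c / K < c / c ^ (1 / (2 * b + 1)) := this
        _ = c ^ (2 * b / (2 * b + 1)) := by
            rw [div_eq_iff hcp.ne', ← Real.rpow_add hc0,
              show 2 * b / (2 * b + 1) + 1 / (2 * b + 1) = 1 by field_simp,
              Real.rpow_one]
    have hM2 : M ^ (2 * q) < c ^ (2 * b / (2 * b + 1)) := lt_of_le_of_lt hM2q hstep
    -- take power -1/2
    have h2 : (c ^ (2 * b / (2 * b + 1))) ^ (-(1/2 : ℝ)) < (M ^ (2 * q)) ^ (-(1/2 : ℝ)) :=
      Real.rpow_lt_rpow_of_neg (Real.rpow_pos_of_pos hM _) hM2 (by norm_num)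
    rw [← Real.rpow_mul hc0.le, ← Real.rpow_mul hM.le] at h2
    have e3 : 2 * b / (2 * b + 1) * -(1/2 : ℝ) = -(b / (2 * b + 1)) := by
      field_simp
    have e4 : 2 * q * -(1/2 : ℝ) = -q := by ring
    rw [e3, e4] at h2
    linarith
end
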